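/- Let (X, ≤₁, ≤₂, R) be a modal FM frame and □ the operation on RO₁₂(X) given by □(Y) = {w | R[w] ⊆ Y} (assumed to map RO₁₂(X) into itself). Then □ preserves arbitrary meets of RO₁₂(X) (which are intersections), and hence has a left adjoint ◆ on RO₁₂(X) given by ◆(Y) = I₁C₂(↑₁ R[Y]). -/

import Mathlib

/-- `I₁C₂` for the Alexandroff upset topologies of an FM frame. -/
def fmIC {X : Type*} (le1 le2 : X → X → Prop) (A : Set X) : Set X :=
  {x | ∀ y, le1 x y → ∃ z, le2 y z ∧ z ∈ A}

/-- The `≤₁`-upward closure. -/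
def fmUp1 {X : Type*} (le1 : X → X → Prop) (Y : Set X) : Set X :=
  {x | ∃ y ∈ Y, le1 y x}

/-- The box operation on sets. -/
def fmBox {X : Type*} (R : X → X → Prop) (Y : Set X) : Set X :=
  {w | ∀ v, R w v → v ∈ Y}

/-- `R[Y]`. -/
def fmRImg {X : Type*} (R : X → X → Prop) (Y : Set X) : Set X :=
  {v | ∃ w ∈ Y, R w v}

/-- Fixed points of `fmIC` are `≤₁`-upsets. -/
lemma fmIC_upset {X : Type*} {le1 le2 : X → X → Prop} [IsTrans X le1]
    {Z : Set X} (hZ : Z = fmIC le1 le2 Z) {v z : X} (hv : v ∈ Z) (h : le1 v z) : z ∈ Z := by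
  rw [hZ]
  intro y hy
  exact (hZ ▸ hv) y (IsTrans.trans v z y h hy)

/-- In a modal FM frame, `□` preserves arbitrary intersections of refined regular open
sets, and `◆(Y) = I₁C₂(↑₁ R[Y])` is its left adjoint on `RO₁₂(X)`. -/
theorem fm_box_meets_and_left_adjoint {X : Type*} (le1 le2 R : X → X → Prop)
    [IsPartialOrder X le1] [IsPartialOrder X le2]
    (hsub : ∀ x y, le2 x y → le1 x y)
    (hbox : ∀ Y : Set X, Y = fmIC le1 le2 Y → fmBox R Y = fmIC le1 le2 (fmBox R Y)) :
    (∀ {ι : Sort*} (Y : ι → Set X), (∀ i, Y i = fmIC le1 le2 (Y i)) →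
      fmBox R (⋂ i, Y i) = ⋂ i, fmBox R (Y i)) ∧
    (∀ Y Z : Set X, Y = fmIC le1 le2 Y → Z = fmIC le1 le2 Z →
      (fmIC le1 le2 (fmUp1 le1 (fmRImg R Y)) ⊆ Z ↔ Y ⊆ fmBox R Z)) := by
  constructor
  · intro ι Y _
    ext w
    simp only [fmBox, Set.mem_setOf_eq, Set.mem_iInter]
    exact ⟨fun h i v hv => h v hv i, fun h v hv i => h i v hv⟩
  · intro Y Z hY hZ
    constructor
    · intro h w hw v hv
      apply h
      intro y h1y
      exact ⟨y, Std.Refl.refl y, ⟨v, ⟨w, hw, hv⟩, h1y⟩⟩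
    · intro h x hx
      rw [hZ]
      intro y h1y
      obtain ⟨z, h2z, v, ⟨w, hw, hv⟩, h1vz⟩ := hx y h1y
      exact ⟨z, h2z, fmIC_upset hZ (h hw v hv) h1vz⟩
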